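/- Let 1→2→⋯→m→1 be an m-vertex directed cycle (m ≥ 2), where for each i ∈ {1,…,m} the arc (i−1,i) carries a real matrix C_i with n columns (indices mod m, x_0 := x_m), and let K_i = kernel(C_i). Then the relations C_i(x_i − x_{i−1}) = 0 for all i ∈ {1,…,m} imply x_1 = x_2 = ⋯ = x_m for every choice of x_1,…,x_m ∈ ℝ^n if and only if {K_1, K_2, …, K_m} is an independent family of subspaces of ℝ^n. -/

import Mathlib

/-- A finite family of subspaces `S i` is independent if `S i ∩ (∑_{j ≠ i} S j) = 0` for all `i`. -/
def IndepFamily {ι V : Type*} [AddCommGroup V] [Module ℝ V] (S : ι → Submodule ℝ V) : Prop :=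
  ∀ i : ι, S i ⊓ (⨆ j ∈ ({i}ᶜ : Set ι), S j) = ⊥

/-- The weighted directed cycle `0 → 1 → ⋯ → m-1 → 0` (matrix `C i` on the
arc `(i-1, i)`, indices mod `m`) is well-configured iff the kernels `K i = ker (C i)` form
an independent family. -/
theorem stmt_1 (m n : ℕ) [NeZero m] (hm : 2 ≤ m) (k : Fin m → ℕ)
    (C : (i : Fin m) → Matrix (Fin (k i)) (Fin n) ℝ) :
    (∀ x : Fin m → (Fin n → ℝ),
        (∀ i : Fin m, (C i).mulVec (x i - x (i - 1)) = 0) → ∀ i j, x i = x j)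
      ↔ IndepFamily (fun i : Fin m => LinearMap.ker (C i).mulVecLin) := by
  classical
  obtain ⟨m, rfl⟩ : ∃ m', m = m' + 1 := ⟨m - 1, by omega⟩
  set K : Fin (m + 1) → Submodule ℝ (Fin n → ℝ) :=
    fun i => LinearMap.ker (C i).mulVecLin with hK
  have hsupeq : ∀ i : Fin (m + 1),
      (⨆ j ∈ ({i}ᶜ : Set (Fin (m + 1))), K j) = ⨆ j ∈ Finset.univ.erase i, K j := by
    intro i
    refine le_antisymm (iSup₂_le fun j hj => le_iSup₂_of_le j ?_ le_rfl)
      (iSup₂_le fun j hj => le_iSup₂_of_le j ?_ le_rfl)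
    · simpa using hj
    · simpa using hj
  constructor
  · -- well-configured → independent
    intro h
    intro i
    rw [eq_bot_iff]
    intro v hv
    rw [Submodule.mem_inf] at hv
    obtain ⟨hv1, hv2⟩ := hv
    rw [hsupeq i, Submodule.mem_iSup_finset_iff_exists_sum] at hv2
    obtain ⟨μ, hμ⟩ := hv2
    set d : Fin (m + 1) → (Fin n → ℝ) := fun j => if j = i then -v else (μ j : Fin n → ℝ)
      with hd
    have hdmem : ∀ j, d j ∈ K j := by
      intro j
      by_cases hj : j = i
      · subst hj
        simp only [hd, if_pos rfl]
        exact neg_mem hv1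
      · simp only [hd, if_neg hj]
        exact (μ j).2
    have hsum : ∑ j, d j = 0 := by
      rw [← Finset.add_sum_erase _ d (Finset.mem_univ i)]
      have he : ∑ j ∈ Finset.univ.erase i, d j
          = ∑ j ∈ Finset.univ.erase i, (μ j : Fin n → ℝ) := by
        refine Finset.sum_congr rfl fun j hj => ?_
        simp [hd, (Finset.mem_erase.mp hj).1]
      rw [he, hμ]
      simp [hd]
    set x : Fin (m + 1) → (Fin n → ℝ) := fun a => ∑ j ∈ Finset.Iic a, d j with hx
    have hdiff : ∀ j : Fin (m + 1), x j - x (j - 1) = d j := by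
      intro j
      by_cases hj : j = 0
      · subst hj
        have h1 : Finset.Iic (0 : Fin (m + 1)) = {0} := by
          ext l; simp [Fin.le_zero_iff]
        have h2 : (0 - 1 : Fin (m + 1)) = Fin.last m := by
          apply Fin.ext
          rw [Fin.coe_sub_one]
          simp
        have h3 : Finset.Iic (Fin.last m) = Finset.univ := by
          ext l; simpa using Fin.le_last l
        simp only [hx, h1, h2, h3, Finset.sum_singleton, hsum, sub_zero]
      · have hjv : (j : ℕ) ≠ 0 := fun hc => hj (Fin.ext hc)
        have hsub : ((j - 1 : Fin (m + 1)) : ℕ) = (j : ℕ) - 1 := by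
          rw [Fin.coe_sub_one, if_neg hj]
        have h1 : Finset.Iic j = insert j (Finset.Iic (j - 1)) := by
          ext l
          simp only [Finset.mem_Iic, Finset.mem_insert, Fin.le_def, Fin.ext_iff, hsub]
          omega
        have h2 : j ∉ Finset.Iic (j - 1) := by
          simp only [Finset.mem_Iic, Fin.le_def, hsub]
          omega
        simp only [hx, h1, Finset.sum_insert h2, add_sub_cancel_right]
    have hcond : ∀ l : Fin (m + 1), (C l).mulVec (x l - x (l - 1)) = 0 := by
      intro l
      rw [hdiff l]
      have := hdmem l
      rw [hK, LinearMap.mem_ker, Matrix.mulVecLin_apply] at this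
      exact this
    have hxi : x i = x (i - 1) := h x hcond i (i - 1)
    have hdi : d i = 0 := by rw [← hdiff i, hxi, sub_self]
    have hv0 : -v = 0 := by simpa [hd] using hdi
    simpa using neg_eq_zero.mp hv0
  · -- independent → well-configured
    intro hind x hx i j
    have hd : ∀ l, x l - x (l - 1) ∈ K l := by
      intro l
      rw [hK, LinearMap.mem_ker, Matrix.mulVecLin_apply]
      exact hx l
    have hsum : ∑ l, (x l - x (l - 1)) = 0 := by
      rw [Finset.sum_sub_distrib, sub_eq_zero]
      exact (Fintype.sum_equiv (Equiv.subRight (1 : Fin (m + 1)))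
        (fun l => x (l - 1)) x fun l => rfl).symm
    have hzero : ∀ l, x l - x (l - 1) = 0 := by
      intro l
      have hmem : x l - x (l - 1) ∈ K l ⊓ ⨆ j ∈ ({l}ᶜ : Set (Fin (m + 1))), K j := by
        refine Submodule.mem_inf.mpr ⟨hd l, ?_⟩
        have heq : x l - x (l - 1)
            = -∑ j ∈ Finset.univ.erase l, (x j - x (j - 1)) := by
          rw [← Finset.add_sum_erase _ _ (Finset.mem_univ l)] at hsum
          exact eq_neg_of_add_eq_zero_left hsum
        rw [heq]
        refine neg_mem (Submodule.sum_mem _ fun j hj => ?_)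
        have hjl : j ∈ ({l}ᶜ : Set (Fin (m + 1))) := by
          simpa using (Finset.mem_erase.mp hj).1
        exact Submodule.mem_iSup_of_mem j (Submodule.mem_iSup_of_mem hjl (hd j))
      have hb := hind l
      rw [hb] at hmem
      simpa using hmem
    have heq : ∀ l, x l = x (l - 1) := fun l => sub_eq_zero.mp (hzero l)
    open Fin.NatCast Fin.CommRing in
    have hnat : ∀ a : ℕ, x (a : Fin (m + 1)) = x 0 := by
      intro a
      induction a with
      | zero => norm_num
      | succ a ih =>
        have h1 : ((a + 1 : ℕ) : Fin (m + 1)) - 1 = (a : Fin (m + 1)) := by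
          push_cast
          ring
        rw [heq ((a + 1 : ℕ) : Fin (m + 1)), h1, ih]
    open Fin.NatCast in
    rw [← Fin.cast_val_eq_self i, ← Fin.cast_val_eq_self j, hnat, hnat]
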